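/- Let P = A₁*a₁ ⋯ A_k*a_k A_{k+1}^∞ be a monomial and L = P ∩ B^im for some B ⊆ A_{k+1}. Then the closure of L in the alphabetic topology equals the union, over all indices i (1 ≤ i ≤ k+1) and all alphabets A with {a_i,…,a_k} ∪ B ⊆ A ⊆ A_i, of the sets A₁*a₁ ⋯ A_{i-1}*a_{i-1} A_i^∞ ∩ A^im. -/

import Mathlib

namespace InfWords

variable {Γ : Type}

/-- Finite and infinite words over `Γ`: `Γ^∞ = Γ* ∪ Γ^ω`. -/
abbrev Word (Γ : Type) := List Γ ⊕ (ℕ → Γ)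

/-- Prepend a finite word to a finite or infinite word. -/
def wappend (u : List Γ) : Word Γ → Word Γ
  | Sum.inl v => Sum.inl (u ++ v)
  | Sum.inr f => Sum.inr fun n => if h : n < u.length then u.get ⟨n, h⟩ else f (n - u.length)

/-- The set of finite words `Γ*` inside `Γ^∞`. -/
def finWords (Γ : Type) : Set (Word Γ) := Set.range Sum.inl

/-- The set of infinite words `Γ^ω` inside `Γ^∞`. -/
def infWords (Γ : Type) : Set (Word Γ) := Set.range Sum.inr

/-- The alphabet of a word: the letters occurring in it. -/
def alph : Word Γ → Set Γ
  | Sum.inl u => {a | a ∈ u}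
  | Sum.inr f => {a | ∃ n, f n = a}

/-- The imaginary part: letters occurring infinitely often. -/
def im : Word Γ → Set Γ
  | Sum.inl _ => ∅
  | Sum.inr f => {a | ∀ n, ∃ m, n ≤ m ∧ f m = a}

/-- `A^∞`: words all of whose letters lie in `A`. -/
def infin (A : Set Γ) : Set (Word Γ) := {α | alph α ⊆ A}

/-- The basic set `u A^∞` of the alphabetic topology. -/
def cone (u : List Γ) (A : Set Γ) : Set (Word Γ) := wappend u '' infin A

/-- The alphabetic topology on `Γ^∞`, generated by the sets `u A^∞`. -/
instance alphTop : TopologicalSpace (Word Γ) :=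
  TopologicalSpace.generateFrom {S | ∃ u A, S = cone u A}

/-- `cpx A`: words with `alph = im = A`. -/
def cpx (A : Set Γ) : Set (Word Γ) := {β | alph β = A ∧ im β = A}

/-- The strict alphabetic topology, generated by the sets `u · cpx A`. -/
def strictTopo (Γ : Type) : TopologicalSpace (Word Γ) :=
  TopologicalSpace.generateFrom {S | ∃ u A, S = wappend u '' cpx A}

/-- `u` is a finite prefix of the word `α`. -/
def IsPre (u : List Γ) : Word Γ → Prop
  | Sum.inl v => u <+: v
  | Sum.inr f => ∀ i : Fin u.length, u.get i = f i.1

/-- The arrow language `→W`: every prefix extends to a prefix lying in `W`. -/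
def arrow (W : Set (List Γ)) : Set (Word Γ) :=
  {α | ∀ u, IsPre u α → ∃ v, IsPre (u ++ v) α ∧ u ++ v ∈ W}

/-- The right quotient `L / A^∞`. -/
def quotInf (L : Set (Word Γ)) (A : Set Γ) : Set (List Γ) :=
  {u | ∃ β ∈ infin A, wappend u β ∈ L}

/-- `A^im`: words whose set of letters occurring infinitely often is exactly `A`. -/
def imSet (A : Set Γ) : Set (Word Γ) := {α | im α = A}

/-- `z^ω`, with the convention `1^ω = 1`. -/
def omegaPow : List Γ → Word Γ
  | [] => Sum.inl []
  | a :: l => Sum.inr fun n => (a :: l).get ⟨n % (a :: l).length, Nat.mod_lt n (Nat.succ_pos _)⟩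

/-- The partial products `u v₀ v₁ ⋯ v_{n-1}`. -/
def partialProd (u : List Γ) (v : ℕ → List Γ) (n : ℕ) : List Γ :=
  u ++ ((List.range n).map v).flatten

/-- `α` is the (finite or infinite) product `u v₀ v₁ v₂ ⋯`, with convention `1^ω = 1`. -/
def IsInfProd (u : List Γ) (v : ℕ → List Γ) : Word Γ → Prop
  | Sum.inl w => (∀ n, partialProd u v n <+: w) ∧ ∃ n, partialProd u v n = w
  | Sum.inr f => (∀ n, IsPre (partialProd u v n) (Sum.inr f)) ∧
      ∀ k, ∃ n, k < (partialProd u v n).length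

/-- `h : Γ* → M` is a monoid homomorphism. -/
structure IsHom {M : Type} [Monoid M] (h : List Γ → M) : Prop where
  map_one : h [] = 1
  map_mul : ∀ u v, h (u ++ v) = h u * h v

/-- `[s][e]^ω`: products `u v₀ v₁ ⋯` with `h u = s` and `h vᵢ = e`. -/
def pairSet {M : Type} (h : List Γ → M) (s e : M) : Set (Word Γ) :=
  {α | ∃ u v, h u = s ∧ (∀ i, h (v i) = e) ∧ IsInfProd u v α}

/-- `(s, e)` is a linked pair. -/
def LinkedPair {M : Type} [Monoid M] (s e : M) : Prop := s * e = s ∧ e * e = e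

/-- `h` strongly recognizes `L`. -/
def StronglyRecognizes {M : Type} [Monoid M] (h : List Γ → M) (L : Set (Word Γ)) : Prop :=
  L = ⋃ (s : M) (e : M) (_ : LinkedPair s e ∧ (pairSet h s e ∩ L).Nonempty), pairSet h s e

/-- `L` is regular: strongly recognized by a surjective homomorphism onto a finite monoid. -/
def Regular (L : Set (Word Γ)) : Prop :=
  ∃ (M : Type) (i : Monoid M), Finite M ∧
    ∃ h : List Γ → M, @IsHom Γ M i h ∧ Function.Surjective h ∧ @StronglyRecognizes Γ M i h L

/-- `L` is deterministic. -/
def Deterministic (L : Set (Word Γ)) : Prop :=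
  Regular L ∧ ∃ W : Set (List Γ), L ∩ infWords Γ = arrow W ∩ infWords Γ

/-- The syntactic preorder `u ≤_L v`. -/
def synLe (L : Set (Word Γ)) (u v : List Γ) : Prop :=
  ∀ x y z : List Γ,
    (wappend (x ++ v ++ y) (omegaPow z) ∈ L → wappend (x ++ u ++ y) (omegaPow z) ∈ L) ∧
    (wappend x (omegaPow (v ++ y)) ∈ L → wappend x (omegaPow (u ++ y)) ∈ L)

/-- The syntactic congruence `u ≡_L v`. -/
def synEq (L : Set (Word Γ)) (u v : List Γ) : Prop := synLe L u v ∧ synLe L v u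

/-- `[s][e]^ω` for syntactic classes represented by words `s`, `e`. -/
def pairSetSyn (L : Set (Word Γ)) (s e : List Γ) : Set (Word Γ) :=
  {α | ∃ u v, synEq L u s ∧ (∀ i, synEq L (v i) e) ∧ IsInfProd u v α}

/-- `s` represents an element of `M_e` in the syntactic monoid of `L`:
`s` is a product of words each of which is a factor of (something equivalent to) `e`. -/
def InMe (L : Set (Word Γ)) (e s : List Γ) : Prop :=
  ∃ parts : List (List Γ), s = parts.flatten ∧ ∀ p ∈ parts, ∃ x y, synEq L (x ++ p ++ y) e

/-- Glue a factorization `u₁ a₁ u₂ a₂ ⋯ u_k a_k` into a single finite word. -/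
def glue : List (List Γ) → List (Set Γ × Γ) → List Γ
  | x :: xs, p :: l => x ++ p.2 :: glue xs l
  | _, _ => []

/-- `(us, β)` is a factorization of `α` as `u₁ a₁ ⋯ u_k a_k β` with `uᵢ ∈ Aᵢ*`, `β ∈ B^∞`. -/
def IsFactorization (l : List (Set Γ × Γ)) (B : Set Γ) (us : List (List Γ)) (β : Word Γ)
    (α : Word Γ) : Prop :=
  us.length = l.length ∧
  (∀ (i : ℕ) (h1 : i < us.length) (h2 : i < l.length),
    ∀ c ∈ us.get ⟨i, h1⟩, c ∈ (l.get ⟨i, h2⟩).1) ∧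
  β ∈ infin B ∧ α = wappend (glue us l) β

/-- The monomial `A₁* a₁ ⋯ A_k* a_k B^∞`. -/
def monomial (l : List (Set Γ × Γ)) (B : Set Γ) : Set (Word Γ) :=
  {α | ∃ us β, IsFactorization l B us β α}

/-- The monomial given by `(l, B)` is unambiguous. -/
def Unambiguous (l : List (Set Γ × Γ)) (B : Set Γ) : Prop :=
  ∀ α us β us' β', IsFactorization l B us β α → IsFactorization l B us' β' α →
    us = us' ∧ β = β'

/-- `L` is a polynomial: a finite union of monomials. -/
def IsPolynomial (L : Set (Word Γ)) : Prop :=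
  ∃ ms : List (List (Set Γ × Γ) × Set Γ), L = {α | ∃ m ∈ ms, α ∈ monomial m.1 m.2}

/-- The set of marker letters of a monomial. -/
def sndSet (l : List (Set Γ × Γ)) : Set Γ := {a | ∃ p ∈ l, p.2 = a}

/-- `M_e`: the submonoid generated by the factors of the idempotent `e`. -/
def Msub {M : Type} [Monoid M] (e : M) : Submonoid M :=
  Submonoid.closure {t | ∃ x y, x * t * y = e}

/-- The variety `DA`: `ese = e` for all idempotents `e` and all `s ∈ M_e`. -/
def IsDA (M : Type) [Monoid M] : Prop :=
  ∀ e : M, e * e = e → ∀ s ∈ Msub e, e * s * e = e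

end InfWords

namespace InfWords
variable {Γ : Type}

/-- The letter at position `n`, if any. -/
def letter (α : Word Γ) (n : ℕ) : Option Γ :=
  match α with
  | Sum.inl u => u[n]?
  | Sum.inr f => some (f n)

@[simp] lemma letter_inl (u : List Γ) (n : ℕ) : letter (Sum.inl u) n = u[n]? := rfl
@[simp] lemma letter_inr (f : ℕ → Γ) (n : ℕ) : letter (Sum.inr f) n = some (f n) := rfl

lemma letter_wappend (u : List Γ) (β : Word Γ) (n : ℕ) :
    letter (wappend u β) n =
      if h : n < u.length then some (u[n]'h) else letter β (n - u.length) := by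
  cases β with
  | inl v =>
    simp only [wappend, letter]
    split
    · rename_i h
      rw [List.getElem?_append_left h, List.getElem?_eq_getElem h]
    · rename_i h
      rw [List.getElem?_append_right (by omega)]
  | inr f =>
    simp only [wappend, letter]
    split <;> simp_all [List.get_eq_getElem]

lemma letter_wappend_add (u : List Γ) (β : Word Γ) (n : ℕ) :
    letter (wappend u β) (n + u.length) = letter β n := by
  rw [letter_wappend]
  split
  · omega
  · congr 1; omega

lemma word_ext {α β : Word Γ} (h : ∀ n, letter α n = letter β n) : α = β := by
  cases α with
  | inl u =>
    cases β with
    | inl v => exact congrArg Sum.inl (List.ext_getElem? fun n => h n)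
    | inr f => exact absurd (h u.length) (by simp)
  | inr f =>
    cases β with
    | inl v => exact absurd (h v.length) (by simp)
    | inr g => exact congrArg Sum.inr (funext fun n => Option.some.inj (h n))

@[simp] lemma wappend_nil (β : Word Γ) : wappend [] β = β := by
  cases β with
  | inl v => simp [wappend]
  | inr f => simp [wappend]

lemma wappend_append (u v : List Γ) (β : Word Γ) :
    wappend (u ++ v) β = wappend u (wappend v β) := by
  apply word_ext
  intro n
  rw [letter_wappend, letter_wappend, letter_wappend]
  rcases Nat.lt_or_ge n u.length with h | h
  · rw [dif_pos (by simp; omega), dif_pos h]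
    congr 1
    exact List.getElem_append_left h
  · by_cases h2 : n < u.length + v.length
    · rw [dif_pos (by simp; omega), dif_neg (by omega), dif_pos (by omega)]
      rw [List.getElem_append_right (by omega)]
    · rw [dif_neg (by simp; omega), dif_neg (by omega), dif_neg (by omega)]
      congr 1
      simp only [List.length_append]
      omega

lemma mem_alph_iff {β : Word Γ} {a : Γ} : a ∈ alph β ↔ ∃ n, letter β n = some a := by
  cases β with
  | inl u =>
    show a ∈ u ↔ _
    simp only [letter_inl]
    constructor
    · intro h
      obtain ⟨i, hi, he⟩ := List.mem_iff_getElem.1 h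
      exact ⟨i, by rw [List.getElem?_eq_getElem hi, he]⟩
    · rintro ⟨n, hn⟩
      exact List.mem_of_getElem? hn
  | inr f =>
    show (∃ n, f n = a) ↔ _
    simp

lemma letter_mem_alph {β : Word Γ} {a : Γ} {n : ℕ} (h : letter β n = some a) : a ∈ alph β :=
  mem_alph_iff.2 ⟨n, h⟩

lemma alph_wappend (u : List Γ) (β : Word Γ) :
    alph (wappend u β) = {a | a ∈ u} ∪ alph β := by
  ext a
  simp only [Set.mem_union, Set.mem_setOf_eq, mem_alph_iff]
  constructor
  · rintro ⟨n, hn⟩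
    rw [letter_wappend] at hn
    split at hn
    · exact Or.inl (Option.some.inj hn ▸ List.getElem_mem _)
    · exact Or.inr ⟨_, hn⟩
  · rintro (h | ⟨n, hn⟩)
    · obtain ⟨i, hi, he⟩ := List.mem_iff_getElem.1 h
      exact ⟨i, by rw [letter_wappend, dif_pos hi, he]⟩
    · exact ⟨n + u.length, by rw [letter_wappend_add]; exact hn⟩

@[simp] lemma im_inl (u : List Γ) : im (Sum.inl u) = (∅ : Set Γ) := rfl

lemma mem_im_inr {f : ℕ → Γ} {a : Γ} :
    a ∈ im (Sum.inr f) ↔ ∀ n, ∃ m, n ≤ m ∧ f m = a := Iff.rfl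

lemma im_wappend (u : List Γ) (β : Word Γ) : im (wappend u β) = im β := by
  cases β with
  | inl v => rfl
  | inr f =>
    ext a
    show (∀ n, ∃ m, n ≤ m ∧ _) ↔ (∀ n, ∃ m, n ≤ m ∧ f m = a)
    constructor
    · intro h n
      obtain ⟨m, hm, he⟩ := h (n + u.length)
      replace he : (if h : m < u.length then u.get ⟨m, h⟩ else f (m - u.length)) = a := he
      rw [dif_neg (by omega)] at he
      exact ⟨m - u.length, by omega, he⟩
    · intro h n
      obtain ⟨m, hm, he⟩ := h n
      refine ⟨m + u.length, by omega, ?_⟩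
      show (if h : m + u.length < u.length then u.get ⟨m + u.length, h⟩
        else f (m + u.length - u.length)) = a
      rw [dif_neg (by omega)]
      simpa using he
  
lemma im_subset_alph (α : Word Γ) : im α ⊆ alph α := by
  cases α with
  | inl u => simp
  | inr f =>
    intro a ha
    obtain ⟨m, _, hm⟩ := ha 0
    exact ⟨m, hm⟩

lemma alph_omegaPow (z : List Γ) : alph (omegaPow z) = {a | a ∈ z} := by
  cases z with
  | nil => ext a; simp [omegaPow, alph]
  | cons b t =>
    ext a
    show (∃ n, _) ↔ _
    constructor
    · rintro ⟨n, rfl⟩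
      exact List.get_mem _ _
    · intro h
      obtain ⟨i, hi, he⟩ := List.mem_iff_getElem.1 h
      refine ⟨i, ?_⟩
      show (b :: t).get ⟨i % (b :: t).length, _⟩ = a
      simp only [List.get_eq_getElem]
      have h2 : i % (b :: t).length = i := Nat.mod_eq_of_lt hi
      simp only [h2]
      exact he

lemma im_omegaPow (z : List Γ) : im (omegaPow z) = {a | a ∈ z} := by
  cases z with
  | nil => ext a; simp [omegaPow, im]
  | cons b t =>
    ext a
    show (∀ n, ∃ m, n ≤ m ∧ _) ↔ _
    constructor
    · intro h
      obtain ⟨m, _, he⟩ := h 0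
      rw [← he]
      exact List.get_mem _ _
    · intro h n
      obtain ⟨i, hi, he⟩ := List.mem_iff_getElem.1 h
      refine ⟨i + n * (b :: t).length, by nlinarith, ?_⟩
      show (b :: t).get ⟨(i + n * (b :: t).length) % (b :: t).length, _⟩ = a
      simp only [List.get_eq_getElem]
      have h2 : (i + n * (b :: t).length) % (b :: t).length = i := by
        rw [Nat.add_mul_mod_self_right]
        exact Nat.mod_eq_of_lt hi
      simp only [h2]
      exact he

lemma inr_split (f : ℕ → Γ) (n : ℕ) :
    (Sum.inr f : Word Γ) = wappend (List.ofFn fun i : Fin n => f i) (Sum.inr fun m => f (m + n)) := by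
  apply word_ext
  intro m
  rw [letter_wappend]
  split
  · rename_i h
    rw [List.length_ofFn] at h
    simp [List.getElem_ofFn]
  · rename_i h
    rw [List.length_ofFn] at h
    simp only [letter_inr, List.length_ofFn]
    have h2 : m - n + n = m := by omega
    rw [h2]

lemma wappend_split {u v : List Γ} {δ γ : Word Γ} (h : wappend u δ = wappend v γ)
    (hle : u.length ≤ v.length) : ∃ w, v = u ++ w ∧ δ = wappend w γ := by
  have hl : ∀ n, letter (wappend u δ) n = letter (wappend v γ) n := fun n => by rw [h]
  refine ⟨v.drop u.length, ?_, ?_⟩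
  · have : u = v.take u.length := by
      apply List.ext_getElem
      · simp [hle]
      · intro i h1 h2
        have := hl i
        rw [letter_wappend, letter_wappend, dif_pos h1, dif_pos (by omega)] at this
        have := Option.some.inj this
        rw [this]
        exact (List.getElem_take ..).symm
    have h3 := List.take_append_drop u.length v
    rw [← this] at h3
    exact h3.symm
  · apply word_ext
    intro m
    have := hl (m + u.length)
    rw [letter_wappend_add, letter_wappend] at this
    rw [this, letter_wappend]
    rcases Nat.lt_or_ge m (v.length - u.length) with h2 | h2
    · rw [dif_pos (by omega), dif_pos (by simpa using h2)]
      congr 1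
      rw [List.getElem_drop]
      congr 1
      omega
    · rw [dif_neg (by omega), dif_neg (by simp; omega)]
      congr 1
      simp only [List.length_drop]
      omega

lemma mem_cone_iff {α : Word Γ} {u : List Γ} {A : Set Γ} :
    α ∈ cone u A ↔ ∃ δ, alph δ ⊆ A ∧ α = wappend u δ := by
  constructor
  · rintro ⟨δ, hδ, rfl⟩
    exact ⟨δ, hδ, rfl⟩
  · rintro ⟨δ, hδ, rfl⟩
    exact ⟨δ, hδ, rfl⟩

lemma isOpen_cone (u : List Γ) (A : Set Γ) : IsOpen (cone u A) :=
  TopologicalSpace.GenerateOpen.basic _ ⟨u, A, rfl⟩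

lemma cone_refine {u v : List Γ} {A A' : Set Γ} {α : Word Γ} (hle : u.length ≤ v.length)
    (h1 : α ∈ cone u A) (h2 : α ∈ cone v A') :
    α ∈ cone v (A ∩ A') ∧ cone v (A ∩ A') ⊆ cone u A ∩ cone v A' := by
  obtain ⟨δ, hδ, hαu⟩ := mem_cone_iff.1 h1
  obtain ⟨γ, hγ, hαv⟩ := mem_cone_iff.1 h2
  obtain ⟨w, rfl, rfl⟩ := wappend_split (hαu ▸ hαv) hle
  have hw : {a | a ∈ w} ⊆ A := by
    intro a ha
    exact hδ ((alph_wappend w γ) ▸ Set.mem_union_left _ ha)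
  have hγA : alph γ ⊆ A := by
    intro a ha
    exact hδ ((alph_wappend w γ) ▸ Set.mem_union_right _ ha)
  constructor
  · exact mem_cone_iff.2 ⟨γ, Set.subset_inter hγA hγ, hαv⟩
  · intro x hx
    obtain ⟨ρ, hρ, rfl⟩ := mem_cone_iff.1 hx
    constructor
    · refine mem_cone_iff.2 ⟨wappend w ρ, ?_, wappend_append u w ρ⟩
      rw [alph_wappend]
      exact Set.union_subset hw (hρ.trans Set.inter_subset_left)
    · exact mem_cone_iff.2 ⟨ρ, hρ.trans Set.inter_subset_right, rfl⟩

lemma cone_directed {u v : List Γ} {A A' : Set Γ} {α : Word Γ}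
    (h1 : α ∈ cone u A) (h2 : α ∈ cone v A') :
    ∃ w C, α ∈ cone w C ∧ cone w C ⊆ cone u A ∩ cone v A' := by
  rcases Nat.le_or_ge u.length v.length with hle | hle
  · obtain ⟨hm, hs⟩ := cone_refine hle h1 h2
    exact ⟨v, A ∩ A', hm, hs⟩
  · obtain ⟨hm, hs⟩ := cone_refine hle h2 h1
    refine ⟨u, A' ∩ A, hm, fun x hx => ?_⟩
    exact ⟨(hs hx).2, (hs hx).1⟩

lemma exists_cone_subset {o : Set (Word Γ)} (ho : IsOpen o) :
    ∀ α ∈ o, ∃ u A, α ∈ cone u A ∧ cone u A ⊆ o := by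
  have ho' : TopologicalSpace.GenerateOpen {S | ∃ u A, S = cone u A} o := ho
  clear ho
  induction ho' with
  | basic s hs =>
    obtain ⟨u, A, rfl⟩ := hs
    exact fun α hα => ⟨u, A, hα, subset_rfl⟩
  | univ =>
    intro α _
    refine ⟨[], Set.univ, mem_cone_iff.2 ⟨α, Set.subset_univ _, (wappend_nil α).symm⟩,
      Set.subset_univ _⟩
  | inter s t _ _ ihs iht =>
    intro α hα
    obtain ⟨u, A, hm1, hs1⟩ := ihs α hα.1
    obtain ⟨v, A', hm2, hs2⟩ := iht α hα.2
    obtain ⟨w, C, hm, hs⟩ := cone_directed hm1 hm2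
    exact ⟨w, C, hm, hs.trans (Set.inter_subset_inter hs1 hs2)⟩
  | sUnion S _ ih =>
    rintro α ⟨s, hs, hαs⟩
    obtain ⟨u, A, hm, hsub⟩ := ih s hs α hαs
    exact ⟨u, A, hm, hsub.trans (Set.subset_sUnion_of_mem hs)⟩

lemma mem_closure_iff_cone {L : Set (Word Γ)} {α : Word Γ} :
    α ∈ closure L ↔ ∀ u A, α ∈ cone u A → (cone u A ∩ L).Nonempty := by
  rw [mem_closure_iff]
  constructor
  · intro h u A hc
    exact h _ (isOpen_cone u A) hc
  · intro h o ho hα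
    obtain ⟨u, A, hm, hsub⟩ := exists_cone_subset ho α hα
    obtain ⟨x, hx1, hx2⟩ := h u A hm
    exact ⟨x, hsub hx1, hx2⟩

@[simp] lemma glue_nil_left (l : List (Set Γ × Γ)) : glue ([] : List (List Γ)) l = [] := by
  cases l <;> rfl

@[simp] lemma glue_nil_right (us : List (List Γ)) : glue us ([] : List (Set Γ × Γ)) = [] := by
  cases us <;> rfl

lemma glue_cons (x : List Γ) (xs : List (List Γ)) (p : Set Γ × Γ) (ps : List (Set Γ × Γ)) :
    glue (x :: xs) (p :: ps) = x ++ p.2 :: glue xs ps := rfl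

lemma glue_append {xs ys : List (List Γ)} {ps qs : List (Set Γ × Γ)}
    (h : xs.length = ps.length) :
    glue (xs ++ ys) (ps ++ qs) = glue xs ps ++ glue ys qs := by
  induction xs generalizing ps with
  | nil =>
    have : ps = [] := by
      cases ps
      · rfl
      · simp at h
    subst this
    simp
  | cons x xs ih =>
    cases ps with
    | nil => simp at h
    | cons p ps =>
      simp only [List.length_cons, Nat.succ.injEq] at h
      simp only [List.cons_append, glue_cons, ih h, List.append_assoc, List.cons_append]

lemma glue_replicate (ps : List (Set Γ × Γ)) :
    glue (List.replicate ps.length ([] : List Γ)) ps = ps.map (·.2) := by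
  induction ps with
  | nil => rfl
  | cons p ps ih =>
    simp only [List.length_cons, List.replicate_succ, glue_cons, ih, List.map_cons,
      List.nil_append]

/-- length of the glued prefix with `t` blocks -/
def cutlen (us : List (List Γ)) (l : List (Set Γ × Γ)) (t : ℕ) : ℕ :=
  (glue (us.take t) (l.take t)).length

@[simp] lemma cutlen_zero (us : List (List Γ)) (l : List (Set Γ × Γ)) : cutlen us l 0 = 0 := rfl

lemma take_succ_getElem {β : Type} (l : List β) (t : ℕ) (h : t < l.length) :
    l.take (t + 1) = l.take t ++ [l[t]] := by
  rw [List.take_succ, List.getElem?_eq_getElem h]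
  rfl

lemma glue_take_succ {us : List (List Γ)} {l : List (Set Γ × Γ)} (hlen : us.length = l.length)
    {t : ℕ} (h : t < l.length) :
    glue (us.take (t + 1)) (l.take (t + 1)) =
      glue (us.take t) (l.take t) ++ (us[t]'(by omega) ++ [(l[t]'h).2]) := by
  rw [take_succ_getElem us t (by omega), take_succ_getElem l t h,
    glue_append (by simp [hlen])]
  rfl

lemma cutlen_succ {us : List (List Γ)} {l : List (Set Γ × Γ)} (hlen : us.length = l.length)
    {t : ℕ} (h : t < l.length) :
    cutlen us l (t + 1) = cutlen us l t + (us[t]'(by omega)).length + 1 := by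
  unfold cutlen
  rw [glue_take_succ hlen h]
  simp
  omega

lemma cutlen_stable {us : List (List Γ)} {l : List (Set Γ × Γ)} (hlen : us.length = l.length)
    {t : ℕ} (h : l.length ≤ t) : cutlen us l t = cutlen us l l.length := by
  unfold cutlen
  rw [List.take_of_length_le h, List.take_of_length_le (by omega), List.take_of_length_le le_rfl,
    List.take_of_length_le (by omega)]

lemma cutlen_mono {us : List (List Γ)} {l : List (Set Γ × Γ)} (hlen : us.length = l.length) :
    Monotone (cutlen us l) := by
  apply monotone_nat_of_le_succ
  intro t
  rcases Nat.lt_or_ge t l.length with h | h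
  · rw [cutlen_succ hlen h]
    omega
  · rw [cutlen_stable hlen h]
    rw [cutlen_stable hlen (show l.length ≤ t + 1 by omega)]

lemma glue_split {us : List (List Γ)} {l : List (Set Γ × Γ)} (hlen : us.length = l.length)
    (t : ℕ) :
    glue us l = glue (us.take t) (l.take t) ++ glue (us.drop t) (l.drop t) := by
  conv_lhs => rw [← List.take_append_drop t us, ← List.take_append_drop t l]
  exact glue_append (by simp [hlen])

lemma cutlen_le_glue {us : List (List Γ)} {l : List (Set Γ × Γ)} (hlen : us.length = l.length)
    (t : ℕ) : cutlen us l t ≤ (glue us l).length := by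
  rw [glue_split hlen t]
  simp [cutlen]

section FactLemmas

variable {l : List (Set Γ × Γ)} {B' : Set Γ} {us : List (List Γ)} {β x : Word Γ}

lemma fact_letter_lt (hf : IsFactorization l B' us β x) {q : ℕ}
    (h : q < (glue us l).length) : letter x q = some ((glue us l)[q]'h) := by
  rw [hf.2.2.2, letter_wappend, dif_pos h]

lemma letter_cut (hf : IsFactorization l B' us β x) {t : ℕ} (ht : t < l.length) {q : ℕ}
    (h1 : cutlen us l t ≤ q) (h2 : q < cutlen us l (t + 1)) :
    letter x q = some (((us[t]'(by rw [hf.1]; exact ht) ++ [(l[t]'ht).2]))[q - cutlen us l t]'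
      (by have := cutlen_succ hf.1 ht; simp only [List.length_append, List.length_singleton]; omega)) := by
  have hlen := hf.1
  have hsucc := cutlen_succ hlen ht
  have hle := cutlen_le_glue hlen (t + 1)
  have hq : q < (glue us l).length := by omega
  rw [fact_letter_lt hf hq]
  congr 1
  have hsplit := glue_split hlen (t + 1)
  rw [List.getElem_of_eq hsplit hq]
  rw [List.getElem_append_left (show q < (glue (us.take (t+1)) (l.take (t+1))).length from h2)]
  rw [List.getElem_of_eq (glue_take_succ hlen ht) (show q < (glue (us.take (t+1)) (l.take (t+1))).length from h2)]
  rw [List.getElem_append_right (show (glue (us.take t) (l.take t)).length ≤ q from h1)]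
  rfl

lemma fact_letter_marker (hf : IsFactorization l B' us β x) {t : ℕ} (ht : t < l.length) :
    letter x (cutlen us l (t + 1) - 1) = some (l[t]'ht).2 := by
  have hlen := hf.1
  have hsucc := cutlen_succ hlen ht
  have hus : t < us.length := by omega
  rw [letter_cut hf ht (show cutlen us l t ≤ cutlen us l (t+1) - 1 by omega) (by omega)]
  congr 1
  rw [List.getElem_append_right (show (us[t]'hus).length ≤ cutlen us l (t+1) - 1 - cutlen us l t by omega)]
  exact List.getElem_singleton _

lemma fact_letter_block (hf : IsFactorization l B' us β x) {t : ℕ} (ht : t < l.length) {q : ℕ}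
    (h1 : cutlen us l t ≤ q) (h2 : q < cutlen us l (t + 1) - 1) :
    ∃ c, letter x q = some c ∧ c ∈ (l[t]'ht).1 := by
  have hlen := hf.1
  have hsucc := cutlen_succ hlen ht
  have hus : t < us.length := by omega
  rw [letter_cut hf ht h1 (by omega)]
  rw [List.getElem_append_left (show q - cutlen us l t < (us[t]'hus).length by omega)]
  refine ⟨_, rfl, ?_⟩
  have hmem : (us[t]'hus)[q - cutlen us l t]'(by omega) ∈ us[t]'hus := List.getElem_mem _
  have := hf.2.1 t hus ht
  simp only [List.get_eq_getElem] at this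
  exact this _ hmem

lemma fact_letter_tail (hf : IsFactorization l B' us β x) {q : ℕ} {c : Γ}
    (h1 : cutlen us l l.length ≤ q) (hc : letter x q = some c) : c ∈ B' := by
  have hlen := hf.1
  have hcut : cutlen us l l.length = (glue us l).length := by
    unfold cutlen
    rw [List.take_length, ← hlen, List.take_length]
  rw [hf.2.2.2, letter_wappend, dif_neg (by omega)] at hc
  exact hf.2.2.1 (letter_mem_alph hc)

end FactLemmas

lemma assemble {l : List (Set Γ × Γ)} {B' : Set Γ} {us : List (List Γ)} {x : Word Γ} {β : Word Γ}
    (hf : IsFactorization l B' us β x) {r : ℕ} (hr : r ≤ l.length) {C : Set Γ}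
    (f : ℕ → Γ)
    (hag : ∀ q, q < cutlen us l r → letter x q = some (f q))
    (hsuf : ∀ q, cutlen us l r ≤ q → f q ∈ C) :
    (Sum.inr f : Word Γ) ∈ monomial (l.take r) C := by
  have hlen := hf.1
  refine ⟨us.take r, Sum.inr fun m => f (m + cutlen us l r), ?_, ?_, ?_, ?_⟩
  · simp [hlen]
  · intro i hi1 hi2 c hc
    simp only [List.get_eq_getElem, List.getElem_take] at hc ⊢
    have hi : i < l.length := by
      simp only [List.length_take] at hi2
      omega
    have := hf.2.1 i (by omega) hi
    simp only [List.get_eq_getElem] at this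
    exact this c hc
  · rintro a ⟨m, rfl⟩
    exact hsuf (m + cutlen us l r) (by omega)
  · have hglue : glue (us.take r) (l.take r) = List.ofFn (fun i : Fin (cutlen us l r) => f i) := by
      apply List.ext_getElem
      · simp only [List.length_ofFn]
        rfl
      · intro i hi1 hi2
        have hxi : letter x i = some ((glue (us.take r) (l.take r))[i]'hi1) := by
          rw [hf.2.2.2, glue_split hlen r, wappend_append, letter_wappend, dif_pos hi1]
        have hfi := hag i (by exact hi1)
        rw [hxi] at hfi
        rw [Option.some.inj hfi, List.getElem_ofFn]
    rw [hglue]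
    exact inr_split f (cutlen us l r)

/-- the alphabet bound at cut `j` -/
def Cd (l : List (Set Γ × Γ)) (B' : Set Γ) (j : ℕ) : Set Γ :=
  if h : j < l.length then (l.get ⟨j, h⟩).1 else B'

section Hard

variable {l : List (Set Γ × Γ)} {B' : Set Γ} {f : ℕ → Γ}
variable {X : ℕ → Word Γ} {US : ℕ → List (List Γ)} {N : ℕ}

/-- the largest number of blocks fitting in the first `n` letters -/
def Jv (l : List (Set Γ × Γ)) (US : ℕ → List (List Γ)) (n : ℕ) : ℕ :=
  Nat.findGreatest (fun t => cutlen (US n) l t ≤ n) l.length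

lemma Jv_le (n : ℕ) : Jv l US n ≤ l.length := Nat.findGreatest_le _

lemma cutlen_Jv_le (n : ℕ) : cutlen (US n) l (Jv l US n) ≤ n := by
  unfold Jv
  exact Nat.findGreatest_spec (P := fun t => cutlen (US n) l t ≤ n) (Nat.zero_le _) (by simp)

lemma cutlen_gt_of_Jv_lt {n t : ℕ} (h1 : Jv l US n < t) (h2 : t ≤ l.length) :
    n < cutlen (US n) l t := by
  unfold Jv at h1
  exact Nat.lt_of_not_le
    (Nat.findGreatest_is_greatest (P := fun t => cutlen (US n) l t ≤ n) h1 h2)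

lemma cutlen_le_of_le_Jv {n t : ℕ} (hlen : (US n).length = l.length)
    (h : t ≤ Jv l US n) : cutlen (US n) l t ≤ n :=
  le_trans (cutlen_mono hlen h) (cutlen_Jv_le n)

def GOAL (l : List (Set Γ × Γ)) (B' : Set Γ) (f : ℕ → Γ) : Prop :=
  ∃ j, j ≤ l.length ∧ sndSet (l.drop j) ⊆ im (Sum.inr f) ∧ im (Sum.inr f) ⊆ Cd l B' j ∧
    (Sum.inr f : Word Γ) ∈ monomial (l.take j) (Cd l B' j)

lemma goal_of (r : ℕ) (hr : r ≤ l.length)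
    (hfact : ∀ n, N ≤ n → ∃ β, IsFactorization l B' (US n) β (X n))
    (hagree : ∀ n, N ≤ n → ∀ q, q < n → letter (X n) q = some (f q))
    (htail : ∀ n, N ≤ n → ∀ q c, n ≤ q → letter (X n) q = some c → c ∈ im (Sum.inr f))
    (hmark : ∀ s (hs : s < l.length), r ≤ s → (l[s]'hs).2 ∈ im (Sum.inr f))
    {p : ℕ}
    (hsuf : ∀ q, p ≤ q → f q ∈ Cd l B' r)
    (n₀ : ℕ) (hN₀ : N ≤ n₀) (hpn₀ : p < n₀) (hp₀ : cutlen (US n₀) l r = p) :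
    GOAL l B' f := by
  refine ⟨r, hr, ?_, ?_, ?_⟩
  · rintro a ⟨pr, hpr, rfl⟩
    obtain ⟨i, hi, rfl⟩ := List.mem_iff_getElem.1 hpr
    have hlen : i < l.length - r := by simpa using hi
    have hd : (l.drop r)[i]'hi = l[r + i]'(by omega) := List.getElem_drop
    rw [hd]
    exact hmark (r + i) (by omega) (by omega)
  · intro a ha
    obtain ⟨m, hm, he⟩ := mem_im_inr.1 ha p
    exact he ▸ hsuf m hm
  · obtain ⟨β₀, hf₀⟩ := hfact n₀ hN₀
    rw [← hp₀] at hsuf hpn₀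
    exact assemble hf₀ hr f (fun q hq => hagree n₀ hN₀ q (by omega)) hsuf

lemma terminalA
    (hfact : ∀ n, N ≤ n → ∃ β, IsFactorization l B' (US n) β (X n))
    (hagree : ∀ n, N ≤ n → ∀ q, q < n → letter (X n) q = some (f q))
    (htail : ∀ n, N ≤ n → ∀ q c, n ≤ q → letter (X n) q = some c → c ∈ im (Sum.inr f))
    {S : Set ℕ} (hSinf : S.Infinite) {r p : ℕ}
    (hS : ∀ n ∈ S, N ≤ n ∧ Jv l US n = r ∧ cutlen (US n) l r = p) :
    GOAL l B' f := by
  obtain ⟨n₁, hn₁S⟩ := hSinf.nonempty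
  have hr : r ≤ l.length := (hS n₁ hn₁S).2.1 ▸ Jv_le n₁
  -- suffix letters
  have hsuf : ∀ q, p ≤ q → f q ∈ Cd l B' r := by
    intro q hq
    obtain ⟨n, hnS, hqn⟩ := hSinf.exists_gt q
    obtain ⟨hN, hJ, hpn⟩ := hS n hnS
    obtain ⟨β, hfn⟩ := hfact n hN
    unfold Cd
    split
    · rename_i h
      have h2 : n < cutlen (US n) l (r + 1) := cutlen_gt_of_Jv_lt (by omega) (by omega)
      obtain ⟨c, hc1, hc2⟩ := fact_letter_block hfn h (q := q) (by omega) (by omega)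
      have hfq := hagree n hN q hqn
      rw [hfq] at hc1
      simp only [List.get_eq_getElem]
      exact (Option.some.inj hc1) ▸ hc2
    · rename_i h
      have hrl : r = l.length := by omega
      subst hrl
      exact fact_letter_tail hfn (by omega) (hagree n hN q hqn)
  -- markers
  have hmark : ∀ s (hs : s < l.length), r ≤ s → (l[s]'hs).2 ∈ im (Sum.inr f) := by
    intro s hs hrs
    obtain ⟨hN, hJ, hpn⟩ := hS n₁ hn₁S
    obtain ⟨β, hfn⟩ := hfact n₁ hN
    have h2 : n₁ < cutlen (US n₁) l (s + 1) := cutlen_gt_of_Jv_lt (by omega) (by omega)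
    have hm := fact_letter_marker hfn hs
    exact htail n₁ hN _ _ (by omega) hm
  obtain ⟨n₀, hn₀S, hpn₀⟩ := hSinf.exists_gt p
  exact goal_of r hr hfact hagree htail hmark hsuf n₀ (hS n₀ hn₀S).1
    (by omega)
    (hS n₀ hn₀S).2.2

lemma terminalB
    (hfact : ∀ n, N ≤ n → ∃ β, IsFactorization l B' (US n) β (X n))
    (hagree : ∀ n, N ≤ n → ∀ q, q < n → letter (X n) q = some (f q))
    (htail : ∀ n, N ≤ n → ∀ q c, n ≤ q → letter (X n) q = some c → c ∈ im (Sum.inr f))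
    {S : Set ℕ} {r p : ℕ}
    (hS : ∀ n ∈ S, N ≤ n ∧ r + 1 ≤ Jv l US n ∧ cutlen (US n) l r = p)
    (hub : ∀ b, ∃ n ∈ S, b < cutlen (US n) l (r + 1)) :
    GOAL l B' f := by
  obtain ⟨n₁, hn₁S, _⟩ := hub 0
  have hr1 : r + 1 ≤ l.length := le_trans (hS n₁ hn₁S).2.1 (Jv_le n₁)
  have hrlen : r < l.length := hr1
  -- for n ∈ S, cutlen (r+1) ≤ n
  have hle : ∀ n ∈ S, cutlen (US n) l (r + 1) ≤ n := by
    intro n hnS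
    obtain ⟨hN, hJ, _⟩ := hS n hnS
    obtain ⟨β, hfn⟩ := hfact n hN
    exact cutlen_le_of_le_Jv hfn.1 hJ
  -- suffix letters
  have hsuf : ∀ q, p ≤ q → f q ∈ Cd l B' r := by
    intro q hq
    obtain ⟨n, hnS, hqn⟩ := hub (q + 1)
    obtain ⟨hN, hJ, hpn⟩ := hS n hnS
    obtain ⟨β, hfn⟩ := hfact n hN
    have h2 : cutlen (US n) l (r + 1) ≤ n := hle n hnS
    obtain ⟨c, hc1, hc2⟩ := fact_letter_block hfn hrlen (q := q) (by omega) (by omega)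
    have hfq := hagree n hN q (by omega)
    rw [hfq] at hc1
    unfold Cd
    rw [dif_pos hrlen]
    simp only [List.get_eq_getElem]
    exact (Option.some.inj hc1) ▸ hc2
  -- markers
  have hmark : ∀ s (hs : s < l.length), r ≤ s → (l[s]'hs).2 ∈ im (Sum.inr f) := by
    intro s hs hrs
    by_cases hc : ∃ n ∈ S, Jv l US n < s + 1
    · obtain ⟨n, hnS, hJs⟩ := hc
      obtain ⟨hN, hJ, hpn⟩ := hS n hnS
      obtain ⟨β, hfn⟩ := hfact n hN
      have h2 : n < cutlen (US n) l (s + 1) := cutlen_gt_of_Jv_lt hJs (by omega)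
      exact htail n hN _ _ (by omega) (fact_letter_marker hfn hs)
    · push_neg at hc
      intro b
      obtain ⟨n, hnS, hbn⟩ := hub (b + 1)
      obtain ⟨hN, hJ, hpn⟩ := hS n hnS
      obtain ⟨β, hfn⟩ := hfact n hN
      have hsJ : s + 1 ≤ Jv l US n := hc n hnS
      have h2 : cutlen (US n) l (s + 1) ≤ n := cutlen_le_of_le_Jv hfn.1 hsJ
      have h3 : cutlen (US n) l (r + 1) ≤ cutlen (US n) l (s + 1) :=
        cutlen_mono hfn.1 (by omega)
      have hm := fact_letter_marker hfn hs
      have hcutpos : 0 < cutlen (US n) l (s + 1) := by omega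
      have hfp := hagree n hN (cutlen (US n) l (s + 1) - 1) (by omega)
      rw [hfp] at hm
      exact ⟨cutlen (US n) l (s + 1) - 1, by omega, (Option.some.inj hm).symm ▸ rfl⟩
  obtain ⟨n₀, hn₀S, hpn₀⟩ := hub p
  have hle₀ := hle n₀ hn₀S
  exact goal_of r (by omega) hfact hagree htail hmark hsuf n₀ (hS n₀ hn₀S).1
    (by omega) (hS n₀ hn₀S).2.2

lemma hard_rec
    (hfact : ∀ n, N ≤ n → ∃ β, IsFactorization l B' (US n) β (X n))
    (hagree : ∀ n, N ≤ n → ∀ q, q < n → letter (X n) q = some (f q))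
    (htail : ∀ n, N ≤ n → ∀ q c, n ≤ q → letter (X n) q = some c → c ∈ im (Sum.inr f)) :
    ∀ (d r : ℕ), l.length - r ≤ d → ∀ S : Set ℕ, S.Infinite →
      (∀ n ∈ S, N ≤ n ∧ r ≤ Jv l US n) →
      ∀ p : ℕ, (∀ n ∈ S, cutlen (US n) l r = p) → GOAL l B' f := by
  intro d
  induction d with
  | zero =>
    intro r hd S hSinf hS p hp
    -- here r ≥ l.length, so Jv n = r for n ∈ S
    refine terminalA hfact hagree htail hSinf (r := r) (p := p) fun n hn => ?_
    have h1 := (hS n hn).2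
    have h2 := Jv_le (l := l) (US := US) n
    exact ⟨(hS n hn).1, by omega, hp n hn⟩
  | succ d ih =>
    intro r hd S hSinf hS p hp
    by_cases hS' : {n ∈ S | r + 1 ≤ Jv l US n}.Infinite
    · by_cases hbdd : ∃ b, ∀ n ∈ {n ∈ S | r + 1 ≤ Jv l US n}, cutlen (US n) l (r + 1) ≤ b
      · -- bounded: pigeonhole and recurse
        obtain ⟨b, hb⟩ := hbdd
        have hfib : ∃ v, {n ∈ {n ∈ S | r + 1 ≤ Jv l US n} |
            cutlen (US n) l (r + 1) = v}.Infinite := by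
          by_contra hcon
          push_neg at hcon
          apply hS'
          have hsub : {n ∈ S | r + 1 ≤ Jv l US n} ⊆
              ⋃ v ∈ Finset.range (b + 1), {n ∈ {n ∈ S | r + 1 ≤ Jv l US n} |
                cutlen (US n) l (r + 1) = v} := by
            intro n hn
            simp only [Set.mem_iUnion, Finset.mem_range]
            exact ⟨cutlen (US n) l (r + 1), by have := hb n hn; omega, hn, rfl⟩
          exact Set.Finite.subset (Set.Finite.biUnion (Finset.range (b + 1)).finite_toSet
            fun v _ => hcon v) hsub
        obtain ⟨v, hv⟩ := hfib
        -- r < l.length since some n has r + 1 ≤ Jv n ≤ l.length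
        obtain ⟨n₁, hn₁⟩ := hv.nonempty
        have hr1 : r + 1 ≤ l.length := le_trans hn₁.1.2 (Jv_le n₁)
        refine ih (r + 1) (by omega) _ hv (fun n hn => ⟨(hS n hn.1.1).1, hn.1.2⟩) v
          fun n hn => hn.2
      · -- unbounded
        push_neg at hbdd
        refine terminalB hfact hagree htail (S := {n ∈ S | r + 1 ≤ Jv l US n}) (r := r) (p := p)
          (fun n hn => ⟨(hS n hn.1).1, hn.2, hp n hn.1⟩) ?_
        intro b
        obtain ⟨n, hn, hbn⟩ := hbdd b
        exact ⟨n, hn, by omega⟩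
    · -- J n = r cofinitely
      rw [Set.not_infinite] at hS'
      have hdiff : (S \ {n ∈ S | r + 1 ≤ Jv l US n}).Infinite := hSinf.diff hS'
      refine terminalA hfact hagree htail hdiff (r := r) (p := p) fun n hn => ?_
      obtain ⟨hnS, hnot⟩ := hn
      have h1 := (hS n hnS).2
      have h2 : ¬ (r + 1 ≤ Jv l US n) := fun h => hnot ⟨hnS, h⟩
      exact ⟨(hS n hnS).1, by omega, hp n hnS⟩

end Hard

lemma glue_append' (xs ys : List (List Γ)) (ps : List (Set Γ × Γ)) :
    glue (xs ++ ys) ps = glue xs (ps.take xs.length) ++ glue ys (ps.drop xs.length) := by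
  induction xs generalizing ps with
  | nil => simp
  | cons x xs ih =>
    cases ps with
    | nil => simp
    | cons p ps =>
      simp only [List.cons_append, glue_cons, List.length_cons, List.take_succ_cons,
        List.drop_succ_cons, ih, List.append_assoc, List.cons_append]

lemma witness_mem {l : List (Set Γ × Γ)} {B' B C : Set Γ} (hB : B ⊆ B') {j : ℕ}
    (hj : j ≤ l.length) {us : List (List Γ)} {β α : Word Γ}
    (hmon : IsFactorization (l.take j) C us β α) (hC : C = Cd l B' j)
    {v : List Γ} (hv : ∀ c ∈ v, c ∈ C) {lB : List Γ} (hlB : ∀ a, a ∈ lB ↔ a ∈ B) :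
    wappend (glue us (l.take j) ++ v ++ (l.drop j).map (·.2)) (omegaPow lB) ∈ monomial l B' ∧
    im (wappend (glue us (l.take j) ++ v ++ (l.drop j).map (·.2)) (omegaPow lB)) = B := by
  have halB : alph (omegaPow lB) = B := by
    rw [alph_omegaPow]; exact Set.ext hlB
  have himB : im (omegaPow lB) = B := by
    rw [im_omegaPow]; exact Set.ext hlB
  have hlen : us.length = j := by
    have := hmon.1
    simp only [List.length_take] at this
    omega
  constructor
  · rcases Nat.lt_or_ge j l.length with hjl | hjl
    · -- j < l.length
      refine ⟨us ++ (v :: List.replicate (l.length - j - 1) []), omegaPow lB, ?_, ?_, ?_, ?_⟩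
      · simp [hlen]; omega
      · intro i hi1 hi2 c hc
        simp only [List.get_eq_getElem] at hc ⊢
        rcases Nat.lt_or_ge i j with hij | hij
        · rw [List.getElem_append_left (by omega)] at hc
          have := hmon.2.1 i (by omega) (by simp; omega)
          simp only [List.get_eq_getElem, List.getElem_take] at this
          exact this c hc
        · rw [List.getElem_append_right (by omega)] at hc
          rcases Nat.eq_or_lt_of_le hij with hij' | hij'
          · subst hij'
            simp only [hlen, Nat.sub_self, List.getElem_cons_zero] at hc
            have := hv c hc
            rw [hC] at this
            unfold Cd at this
            rw [dif_pos hjl] at this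
            simpa using this
          · have hzero : ∀ k (hk : k < (v :: List.replicate (l.length - j - 1)
                ([] : List Γ)).length), k ≠ 0 →
                (v :: List.replicate (l.length - j - 1) ([] : List Γ))[k] = [] := by
              intro k hk hk0
              match k with
              | Nat.succ m =>
                simp only [List.getElem_cons_succ]
                exact List.getElem_replicate _
            rw [hzero _ _ (by omega)] at hc
            simp at hc
      · rw [infin, Set.mem_setOf_eq, halB]
        exact hB
      · have h1 := glue_append' us (v :: List.replicate (l.length - j - 1) ([] : List Γ)) l
        rw [hlen] at h1
        rw [h1]
        rw [List.drop_eq_getElem_cons hjl, glue_cons]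
        have hrep : glue (List.replicate (l.length - j - 1) ([] : List Γ)) (l.drop (j + 1)) =
            (l.drop (j + 1)).map (·.2) := by
          have h2 : l.length - j - 1 = (l.drop (j + 1)).length := by
            rw [List.length_drop]
            omega
          rw [h2, glue_replicate]
        rw [hrep]
        simp only [List.map_cons, List.append_assoc]
    · -- j = l.length
      have hjl : j = l.length := by omega
      subst hjl
      simp only [List.take_length, List.drop_length, List.map_nil, List.append_nil]
      refine ⟨us, wappend v (omegaPow lB), ?_, ?_, ?_, ?_⟩
      · exact hlen
      · intro i hi1 hi2 c hc
        have := hmon.2.1 i hi1 (by simp; omega)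
        simp only [List.get_eq_getElem, List.getElem_take] at this ⊢
        simp only [List.get_eq_getElem] at hc
        exact this c hc
      · rw [infin, Set.mem_setOf_eq, alph_wappend, halB]
        refine Set.union_subset ?_ hB
        intro c hc
        have := hv c hc
        rw [hC] at this
        unfold Cd at this
        rw [dif_neg (by omega)] at this
        exact this
      · rw [← wappend_append]
  · rw [im_wappend, himB]

end InfWords

open InfWords in
theorem closure_monomial_inter_imSet (Γ : Type) [Fintype Γ]
    (l : List (Set Γ × Γ)) (B' B : Set Γ) (hB : B ⊆ B') :
    closure (InfWords.monomial l B' ∩ InfWords.imSet B) =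
      ⋃ (j : ℕ) (_ : j ≤ l.length) (A : Set Γ)
        (_ : InfWords.sndSet (l.drop j) ∪ B ⊆ A ∧
          A ⊆ (if h : j < l.length then (l.get ⟨j, h⟩).1 else B')),
        (InfWords.monomial (l.take j) (if h : j < l.length then (l.get ⟨j, h⟩).1 else B') ∩
          InfWords.imSet A) := by
  apply subset_antisymm
  · intro α hα
    rw [mem_closure_iff_cone] at hα
    by_cases hαL : α ∈ monomial l B' ∩ imSet B
    · simp only [Set.mem_iUnion]
      refine ⟨l.length, le_rfl, B, ⟨?_, ?_⟩, ?_, ?_⟩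
      · intro a ha
        rcases ha with h | h
        · obtain ⟨pr, hpr, _⟩ := h
          rw [List.drop_length] at hpr
          simp at hpr
        · exact h
      · rw [dif_neg (lt_irrefl _)]
        exact hB
      · rw [List.take_length, dif_neg (lt_irrefl _)]
        exact hαL.1
      · exact hαL.2
    · cases α with
      | inl w =>
        exfalso
        obtain ⟨x, hx1, hx2⟩ := hα w ∅ (mem_cone_iff.2 ⟨Sum.inl [], by
            rintro a ⟨⟩, by simp [wappend]⟩)
        obtain ⟨δ, hδ, rfl⟩ := mem_cone_iff.1 hx1
        cases δ with
        | inl v =>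
          have hv : v = [] := by
            cases v with
            | nil => rfl
            | cons a t =>
              exact absurd (hδ (show a ∈ alph (Sum.inl (a :: t))
                from List.mem_cons_self)) (Set.notMem_empty a)
          subst hv
          apply hαL
          simpa [wappend] using hx2
        | inr g => exact absurd (hδ ⟨0, rfl⟩) (Set.notMem_empty _)
      | inr f =>
        clear hαL
        -- find N beyond which all letters are recurrent
        obtain ⟨N, hN⟩ : ∃ N, ∀ q, N ≤ q → f q ∈ im (Sum.inr f) := by
          have h1 : ∀ c : Γ, ∃ n, c ∈ im (Sum.inr f) ∨ ∀ m, n ≤ m → f m ≠ c := by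
            intro c
            by_cases hc : c ∈ im (Sum.inr f)
            · exact ⟨0, Or.inl hc⟩
            · rw [mem_im_inr] at hc
              push_neg at hc
              obtain ⟨n, hn⟩ := hc
              exact ⟨n, Or.inr hn⟩
          choose nc hnc using h1
          refine ⟨Finset.univ.sup nc, fun q hq => ?_⟩
          rcases hnc (f q) with h | h
          · exact h
          · exact absurd rfl (h q (le_trans (Finset.le_sup (Finset.mem_univ (f q))) hq))
        have hconeN : ∀ n, N ≤ n → Sum.inr f ∈
            cone (List.ofFn fun i : Fin n => f i) (im (Sum.inr f)) := by
          intro n hn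
          refine mem_cone_iff.2 ⟨Sum.inr fun m => f (m + n), ?_, inr_split f n⟩
          rintro a ⟨m, rfl⟩
          exact hN (m + n) (by omega)
        have hex : ∀ n, ∃ (x : Word Γ) (us : List (List Γ)) (β : Word Γ), N ≤ n →
            IsFactorization l B' us β x ∧ im x = B ∧
            ∃ δ, alph δ ⊆ im (Sum.inr f) ∧
              x = wappend (List.ofFn fun i : Fin n => f i) δ := by
          intro n
          by_cases hn : N ≤ n
          · obtain ⟨x, hx1, hx2⟩ := hα _ _ (hconeN n hn)
            obtain ⟨δ, hδ, hxw⟩ := mem_cone_iff.1 hx1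
            obtain ⟨us, β, hf⟩ := hx2.1
            exact ⟨x, us, β, fun _ => ⟨hf, hx2.2, δ, hδ, hxw⟩⟩
          · exact ⟨Sum.inl [], [], Sum.inl [], fun h => absurd h hn⟩
        choose X US BETA hX using hex
        have hfact : ∀ n, N ≤ n → ∃ β, IsFactorization l B' (US n) β (X n) :=
          fun n hn => ⟨BETA n, ((hX n) hn).1⟩
        have hagree : ∀ n, N ≤ n → ∀ q, q < n → letter (X n) q = some (f q) := by
          intro n hn q hq
          obtain ⟨δ, hδ, hxw⟩ := ((hX n) hn).2.2
          rw [hxw, letter_wappend, dif_pos (by simpa using hq)]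
          simp
        have htail : ∀ n, N ≤ n → ∀ q c, n ≤ q → letter (X n) q = some c →
            c ∈ im (Sum.inr f) := by
          intro n hn q c hq hc
          obtain ⟨δ, hδ, hxw⟩ := ((hX n) hn).2.2
          rw [hxw, letter_wappend, dif_neg (by simp; omega)] at hc
          exact hδ (letter_mem_alph hc)
        have hBA : B ⊆ im (Sum.inr f) := by
          obtain ⟨δ, hδ, hxw⟩ := ((hX N) le_rfl).2.2
          have h2 : im (X N) = B := ((hX N) le_rfl).2.1
          rw [← h2, hxw, im_wappend]
          exact (im_subset_alph δ).trans hδ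
        obtain ⟨j, hj, hsnd, hsub, hmon⟩ := hard_rec hfact hagree htail l.length 0 (by omega)
          (Set.Ici N) (Set.Ici_infinite N) (fun n hn => ⟨hn, Nat.zero_le _⟩) 0
          (fun n _ => cutlen_zero _ _)
        simp only [Set.mem_iUnion]
        unfold Cd at hsub hmon
        exact ⟨j, hj, im (Sum.inr f), ⟨Set.union_subset hsnd hBA, hsub⟩, hmon, rfl⟩
  · intro α hα
    simp only [Set.mem_iUnion] at hα
    obtain ⟨j, hj, A, ⟨hA1, hA2⟩, hαm, hαim⟩ := hα
    rw [mem_closure_iff_cone]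
    intro u D hcone
    obtain ⟨δ, hδ, hαu⟩ := mem_cone_iff.1 hcone
    obtain ⟨us, β, hmon⟩ := hαm
    have him' : im α = A := hαim
    obtain ⟨lB, hlB⟩ : ∃ lB : List Γ, ∀ a, a ∈ lB ↔ a ∈ B :=
      ⟨B.toFinite.toFinset.toList, fun a => by simp⟩
    have hCd : (if h : j < l.length then (l.get ⟨j, h⟩).1 else B') = Cd l B' j := rfl
    have hAD : A ⊆ D := by
      rw [← him', hαu, im_wappend]
      exact (im_subset_alph δ).trans hδ
    have hBA : B ⊆ A := fun a ha => hA1 (Or.inr ha)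
    have hsndA : sndSet (l.drop j) ⊆ A := fun a ha => hA1 (Or.inl ha)
    have htD : ∀ a ∈ (l.drop j).map (·.2), a ∈ D := by
      intro a ha
      obtain ⟨pr, hpr, he⟩ := List.mem_map.1 ha
      exact hAD (hsndA ⟨pr, hpr, he⟩)
    have hαg : α = wappend (glue us (l.take j)) β := hmon.2.2.2
    have halB : ∀ a ∈ alph (omegaPow lB), a ∈ D := by
      rw [alph_omegaPow]
      intro a ha
      exact hAD (hBA ((hlB a).1 ha))
    rcases Nat.le_or_ge u.length (glue us (l.take j)).length with hle | hle
    · obtain ⟨s, hgs, hδs⟩ := wappend_split (hαu.symm.trans hαg) hle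
      obtain ⟨hw1, hw2⟩ := witness_mem (B := B) hB hj hmon hCd (v := [])
        (by intro c hc; simp at hc) hlB
      have hx : wappend (glue us (l.take j) ++ [] ++ (l.drop j).map (·.2)) (omegaPow lB)
          = wappend u (wappend (s ++ (l.drop j).map (·.2)) (omegaPow lB)) := by
        rw [hgs, ← wappend_append]
        congr 1
        simp
      refine ⟨_, mem_cone_iff.2 ⟨wappend (s ++ (l.drop j).map (·.2)) (omegaPow lB), ?_, hx⟩,
        hw1, hw2⟩
      rw [alph_wappend]
      apply Set.union_subset
      · intro a ha
        rcases List.mem_append.1 ha with h | h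
        · apply hδ
          rw [hδs, alph_wappend]
          exact Or.inl h
        · exact htD a h
      · intro a ha
        exact halB a ha
    · obtain ⟨s, hus, hβs⟩ := wappend_split (hαg.symm.trans hαu) hle
      have hβC : alph β ⊆ (if h : j < l.length then (l.get ⟨j, h⟩).1 else B') := hmon.2.2.1
      have hsC : ∀ c ∈ s, c ∈ (if h : j < l.length then (l.get ⟨j, h⟩).1 else B') := by
        intro c hc
        apply hβC
        rw [hβs, alph_wappend]
        exact Or.inl hc
      obtain ⟨hw1, hw2⟩ := witness_mem (B := B) hB hj hmon hCd (v := s) hsC hlB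
      have hx : wappend (glue us (l.take j) ++ s ++ (l.drop j).map (·.2)) (omegaPow lB)
          = wappend u (wappend ((l.drop j).map (·.2)) (omegaPow lB)) := by
        rw [hus, ← wappend_append]
      refine ⟨_, mem_cone_iff.2 ⟨wappend ((l.drop j).map (·.2)) (omegaPow lB), ?_, hx⟩,
        hw1, hw2⟩
      rw [alph_wappend]
      apply Set.union_subset
      · intro a ha
        exact htD a ha
      · intro a ha
        exact halB a ha
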